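/- Let A be a commutative ring and f ∈ A a non-zero-divisor. If V is a finitely generated projective A-module such that the localization V_f is a projective A_f-module of constant rank d, then V has constant rank d. Equivalently: if V is finitely generated projective and V = V₀ ⊕ V₁ with (V₁)_f = 0, then V₁ = 0. -/

import Mathlib

open Function

section helper

lemma my_finrank_eq_of_isLocalizedModule {R : Type} [CommRing R] (p : Ideal R) [p.IsPrime]
    {M : Type} [AddCommGroup M] [Module R M]
    (Rₚ Mₚ : Type) [CommRing Rₚ] [Algebra R Rₚ] [IsLocalization.AtPrime Rₚ p]
    [AddCommGroup Mₚ] [Module R Mₚ] (l : M →ₗ[R] Mₚ) [IsLocalizedModule p.primeCompl l]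
    [Module Rₚ Mₚ] [IsScalarTower R Rₚ Mₚ] :
    Module.finrank (Localization.AtPrime p) (LocalizedModule p.primeCompl M)
      = Module.finrank Rₚ Mₚ := by
  let i := (IsLocalization.algEquiv p.primeCompl (Localization.AtPrime p) Rₚ).toRingEquiv
  let j := IsLocalizedModule.iso p.primeCompl l
  have hc : ∀ (r : Localization.AtPrime p) (m : LocalizedModule p.primeCompl M),
      j (r • m) = i r • j m := by
    intro r x
    obtain ⟨⟨r, s⟩, rfl⟩ := IsLocalization.mk'_surjective p.primeCompl r
    apply ((Module.End.isUnit_iff _).mp (IsLocalizedModule.map_units l s)).1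
    simp only [i, j, Module.algebraMap_end_apply, AlgEquiv.toRingEquiv_eq_coe,
      AlgEquiv.toRingEquiv_toRingHom, RingHom.coe_coe, IsLocalization.algEquiv_apply,
      IsLocalization.map_id_mk']
    simp only [AlgEquiv.coe_ringEquiv, IsLocalization.algEquiv_mk', ← map_smul, ← smul_assoc,
      IsLocalization.smul_mk'_self, algebraMap_smul, IsLocalization.map_id_mk']
  have hrank := rank_eq_of_equiv_equiv (R := Localization.AtPrime p) (R' := Rₚ)
    (M := LocalizedModule p.primeCompl M) (M₁ := Mₚ)
    (ZeroHom.mk i (map_zero i)) j.toAddEquiv i.bijective hc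
  simp only [Module.finrank, hrank]


lemma my_rank_localization {A : Type} [CommRing A] (S : Submonoid A) (V : Type) [AddCommGroup V]
    [Module A V] (Q : Ideal (Localization S)) [Q.IsPrime] :
    Module.finrank (Localization.AtPrime Q) (LocalizedModule Q.primeCompl (LocalizedModule S V)) =
      Module.finrank (Localization.AtPrime (Q.comap (algebraMap A (Localization S))))
        (LocalizedModule (Q.comap (algebraMap A (Localization S))).primeCompl V) := by
  let p' := Q.comap (algebraMap A (Localization S))
  haveI : p'.IsPrime := Ideal.IsPrime.comap _
  have hp' : S ≤ p'.primeCompl := fun x hx H ↦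
    (‹Q.IsPrime›).ne_top (Ideal.eq_top_of_isUnit_mem _ H (IsLocalization.map_units _ ⟨x, hx⟩))
  let Rₚ := Localization.AtPrime p'
  let Mₚ := LocalizedModule p'.primeCompl V
  letI : Algebra (Localization S) Rₚ :=
    IsLocalization.localizationAlgebraOfSubmonoidLe _ _ S p'.primeCompl hp'
  have : IsScalarTower A (Localization S) Rₚ :=
    IsLocalization.localization_isScalarTower_of_submonoid_le ..
  have : IsLocalization.AtPrime Rₚ Q := by
    have := IsLocalization.isLocalization_of_submonoid_le (Localization S) Rₚ _ _ hp'
    apply IsLocalization.isLocalization_of_is_exists_mul_mem _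
      (Submonoid.map (algebraMap A (Localization S)) p'.primeCompl)
    · rintro _ ⟨x, hx, rfl⟩; exact hx
    · rintro ⟨x, hx⟩
      obtain ⟨⟨x, s⟩, rfl⟩ := IsLocalization.mk'_surjective S x
      refine ⟨algebraMap _ _ s.1, x, fun H ↦ hx ?_, by simp⟩
      dsimp only
      rw [IsLocalization.mk'_eq_mul_mk'_one]
      exact Ideal.mul_mem_right _ _ H
  letI : Module (Localization S) Mₚ := Module.compHom Mₚ (algebraMap _ Rₚ)
  have : IsScalarTower A (Localization S) Mₚ :=
    ⟨fun r r' m ↦ show algebraMap _ Rₚ (r • r') • m = _ by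
      simp [Algebra.smul_def, ← IsScalarTower.algebraMap_apply, mul_smul]; rfl⟩
  have : IsScalarTower (Localization S) Rₚ Mₚ :=
    ⟨fun r r' m ↦ show _ = algebraMap _ Rₚ r • _ by rw [← mul_smul (algebraMap (Localization S) Rₚ r) r' m, ← Algebra.smul_def]⟩
  let l := (IsLocalizedModule.liftOfLE _ _ hp' (LocalizedModule.mkLinearMap S V)
    (LocalizedModule.mkLinearMap p'.primeCompl V)).extendScalarsOfIsLocalization S
    (Localization S)
  have : IsLocalizedModule Q.primeCompl l := by
    have : IsLocalizedModule p'.primeCompl (l.restrictScalars A) :=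
      inferInstanceAs (IsLocalizedModule p'.primeCompl
        (IsLocalizedModule.liftOfLE _ _ hp' (LocalizedModule.mkLinearMap S V)
        (LocalizedModule.mkLinearMap p'.primeCompl V)))
    have : IsLocalizedModule (Algebra.algebraMapSubmonoid (Localization S) p'.primeCompl) l :=
      IsLocalizedModule.of_restrictScalars p'.primeCompl ..
    apply IsLocalizedModule.of_exists_mul_mem
      (Algebra.algebraMapSubmonoid (Localization S) p'.primeCompl)
    · rintro _ ⟨x, hx, rfl⟩; exact hx
    · rintro ⟨x, hx⟩
      obtain ⟨⟨x, s⟩, rfl⟩ := IsLocalization.mk'_surjective S x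
      refine ⟨algebraMap _ _ s.1, x, fun H ↦ hx ?_, by simp⟩
      dsimp only
      rw [IsLocalization.mk'_eq_mul_mk'_one]
      exact Ideal.mul_mem_right _ _ H
  exact my_finrank_eq_of_isLocalizedModule Q Rₚ Mₚ l

end helper


/-- Let `A` be a commutative ring and `f ∈ A` a non-zero-divisor.  If `V` is a
finitely generated projective `A`-module whose localization `V_f` has constant rank
`d` over `A_f`, then `V` has constant rank `d`.  Equivalently, if
`V ≅ V₀ ⊕ V₁` with `(V₁)_f = 0`, then `V₁ = 0`. -/
theorem stmt_8 {A : Type} [CommRing A] (f : A) (hf : f ∈ nonZeroDivisors A)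
    (V : Type) [AddCommGroup V] [Module A V]
    [Module.Finite A V] [Module.Projective A V] (d : ℕ)
    (hconst : ∀ (P : Ideal (Localization (Submonoid.powers f))) [P.IsPrime],
      Module.finrank (Localization.AtPrime P)
        (LocalizedModule P.primeCompl (LocalizedModule (Submonoid.powers f) V)) = d) :
    (∀ (p : Ideal A) [p.IsPrime],
      Module.finrank (Localization.AtPrime p) (LocalizedModule p.primeCompl V) = d) ∧
    (∀ (V₀ V₁ : Type) (_ : AddCommGroup V₀) (_ : AddCommGroup V₁)
      (_ : Module A V₀) (_ : Module A V₁),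
      Nonempty (V ≃ₗ[A] V₀ × V₁) →
      Subsingleton (LocalizedModule (Submonoid.powers f) V₁) →
      Subsingleton V₁) := by
  constructor
  · intro p hp
    haveI : Module.FinitePresentation A V := Module.finitePresentation_of_projective A V
    set x : PrimeSpectrum A := ⟨p, hp⟩ with hx
    have hlc := Module.isLocallyConstant_rankAtStalk (R := A) (M := V)
    have hopen : IsOpen (Module.rankAtStalk (R := A) V ⁻¹' {Module.rankAtStalk V x}) := hlc _
    have hmem : x ∈ Module.rankAtStalk (R := A) V ⁻¹' {Module.rankAtStalk V x} := rfl
    obtain ⟨U, ⟨g, rfl⟩, hxg, hsub⟩ :=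
      PrimeSpectrum.isTopologicalBasis_basic_opens.exists_subset_of_mem_open hmem hopen
    have hg : g ∉ p := hxg
    have hnil : ¬ IsNilpotent (f * g) := by
      rintro ⟨n, hn⟩
      rw [mul_pow] at hn
      have hgn : g ^ n * f ^ n = 0 := by rw [mul_comm, hn]
      have : g ^ n = 0 := (mem_nonZeroDivisors_iff_right.mp (pow_mem hf n)) _ hgn
      exact hg (hp.mem_of_pow_mem n (this ▸ p.zero_mem))
    have hne : (PrimeSpectrum.basicOpen (f * g) : Set (PrimeSpectrum A)).Nonempty := by
      by_contra hemp
      rw [Set.not_nonempty_iff_eq_empty] at hemp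
      exact hnil ((PrimeSpectrum.basicOpen_eq_bot_iff _).mp
        (TopologicalSpace.Opens.ext (by rw [hemp]; rfl)))
    obtain ⟨q, hq⟩ := hne
    have hfg : f * g ∉ q.asIdeal := hq
    haveI : q.asIdeal.IsPrime := q.2
    have hfq : f ∉ q.asIdeal := fun h ↦ hfg (Ideal.mul_mem_right _ _ h)
    have hgq : g ∉ q.asIdeal := fun h ↦ hfg (Ideal.mul_mem_left _ _ h)
    have hq_rank : Module.rankAtStalk (R := A) V q = Module.rankAtStalk V x :=
      hsub (show q ∈ (PrimeSpectrum.basicOpen g : Set (PrimeSpectrum A)) from hgq)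
    obtain ⟨Q, hQ⟩ : q ∈ Set.range
        (PrimeSpectrum.comap (algebraMap A (Localization.Away f))) := by
      rw [PrimeSpectrum.localization_away_comap_range (Localization.Away f) f]
      exact hfq
    haveI : Q.asIdeal.IsPrime := Q.2
    have hcom : Q.asIdeal.comap (algebraMap A (Localization (Submonoid.powers f)))
        = q.asIdeal := congrArg PrimeSpectrum.asIdeal hQ
    have htrans := my_rank_localization (Submonoid.powers f) V Q.asIdeal
    rw [hconst Q.asIdeal] at htrans
    have h2 : Module.rankAtStalk (R := A) V
        (PrimeSpectrum.comap (algebraMap A (Localization.Away f)) Q) = d := htrans.symm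
    rw [hQ] at h2
    exact hq_rank.symm.trans h2
  · rintro V₀ V₁ _ _ _ _ ⟨e⟩ hsub
    obtain ⟨σ, hσ⟩ := Module.projective_def.mp ‹Module.Projective A V›
    have hσinj : Function.Injective σ := hσ.injective
    let ι : V₁ →ₗ[A] (V →₀ A) := σ ∘ₗ (e.symm.toLinearMap ∘ₗ LinearMap.inr A V₀ V₁)
    have hιinj : Function.Injective ι :=
      hσinj.comp (e.symm.injective.comp LinearMap.inr_injective)
    refine subsingleton_of_forall_eq 0 fun x ↦ ?_
    have h0 : (LocalizedModule.mk x 1 : LocalizedModule (Submonoid.powers f) V₁)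
        = LocalizedModule.mk 0 1 := Subsingleton.elim _ _
    rw [LocalizedModule.mk_eq] at h0
    obtain ⟨u, hu⟩ := h0
    simp only [one_smul, smul_zero] at hu
    obtain ⟨n, hn⟩ := u.2
    have hfn : f ^ n = (u : A) := hn
    have hux : (f ^ n) • x = 0 := by rw [hfn]; exact hu
    have h1 : (f ^ n) • ι x = 0 := by rw [← map_smul, hux, map_zero]
    have h2 : ι x = 0 := by
      ext a
      have := congrArg (fun g ↦ g a) h1
      simp only [Finsupp.smul_apply, smul_eq_mul, Finsupp.coe_zero, Pi.zero_apply] at this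
      exact (mem_nonZeroDivisors_iff_right.mp (pow_mem hf n)) _ (by rw [mul_comm]; exact this)
    exact hιinj (by rw [h2, map_zero])
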